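/- arXiv:2602.15328 — 4 statements merged into one kernel-verified Lean document; each statement's English description precedes it below -/
import Mathlib

section
/- Let N ≥ 1, let a, b : Fin N → ℝ satisfy a i > 0 and b i > 0 for all i, let Σ be an N×N real symmetric positive semidefinite matrix, and set D i j = Σ i i + Σ j j − 2·Σ i j and α i j = (a i + a j)/2. Let F be a finite Borel measure on (0,∞). Then the N×N matrix K with entries K i j = ∫₀^∞ √(b i · b j) / √(α i j + D i j · w) dF(w) is positive semidefinite, i.e. ∑_{i,j} r i · r j · K i j ≥ 0 for every vector r : Fin N → ℝ. -/
open MeasureTheory Nat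


theorem psdAux {N : ℕ} {S : Matrix (Fin N) (Fin N) ℝ} (hS : S.PosSemidef) :
    ∃ (m : ℕ) (B : Matrix (Fin m) (Fin N) ℝ), S = B.conjTranspose * B := by
  obtain ⟨m, v, hv⟩ := Matrix.posSemidef_iff_eq_sum_vecMulVec.mp hS
  refine ⟨m, Matrix.of fun k i => v k i, ?_⟩
  subst hv
  ext i j
  simp [Matrix.mul_apply, Matrix.sum_apply, Matrix.vecMulVec_apply]

lemma expInner_psd {N M : ℕ} (c : Fin N → ℝ) (x : Fin N → Fin M → ℝ) :
    0 ≤ ∑ i, ∑ j, c i * c j * Real.exp (∑ k, x i k * x j k) := by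
  have hsum : ∀ i j : Fin N,
      Summable (fun n : ℕ => c i * c j * ((∑ k, x i k * x j k) ^ n / n !)) :=
    fun i j => (Real.summable_pow_div_factorial _).mul_left _
  have hexp : ∀ i j : Fin N, c i * c j * Real.exp (∑ k, x i k * x j k)
      = ∑' n : ℕ, c i * c j * ((∑ k, x i k * x j k) ^ n / n !) := by
    intro i j
    rw [Real.exp_eq_exp_ℝ, NormedSpace.exp_eq_tsum_div, ← tsum_mul_left]
  calc ∑ i, ∑ j, c i * c j * Real.exp (∑ k, x i k * x j k)
      = ∑ i, ∑ j, ∑' n : ℕ, c i * c j * ((∑ k, x i k * x j k) ^ n / n !) :=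
        Finset.sum_congr rfl fun i _ => Finset.sum_congr rfl fun j _ => hexp i j
    _ = ∑ i, ∑' n : ℕ, ∑ j, c i * c j * ((∑ k, x i k * x j k) ^ n / n !) :=
        Finset.sum_congr rfl fun i _ => (Summable.tsum_finsetSum fun j _ => hsum i j).symm
    _ = ∑' n : ℕ, ∑ i, ∑ j, c i * c j * ((∑ k, x i k * x j k) ^ n / n !) :=
        (Summable.tsum_finsetSum fun i _ => summable_sum fun j _ => hsum i j).symm
    _ ≥ 0 := by
        refine tsum_nonneg fun n => ?_
        have key : ∑ i, ∑ j, c i * c j * (∑ k, x i k * x j k) ^ n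
            = ∑ p : Fin n → Fin M, (∑ i, c i * ∏ t, x i (p t)) ^ 2 := by
          have h1 : ∀ i j : Fin N, c i * c j * (∑ k, x i k * x j k) ^ n
              = ∑ p : Fin n → Fin M, (c i * ∏ t, x i (p t)) * (c j * ∏ t, x j (p t)) := by
            intro i j
            rw [Fintype.sum_pow, Finset.mul_sum]
            exact Finset.sum_congr rfl fun p _ => by rw [Finset.prod_mul_distrib]; ring
          simp_rw [h1]
          calc ∑ i, ∑ j, ∑ p : Fin n → Fin M,
                (c i * ∏ t, x i (p t)) * (c j * ∏ t, x j (p t))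
              = ∑ i, ∑ p : Fin n → Fin M, ∑ j,
                (c i * ∏ t, x i (p t)) * (c j * ∏ t, x j (p t)) :=
                Finset.sum_congr rfl fun i _ => Finset.sum_comm
            _ = ∑ p : Fin n → Fin M, ∑ i, ∑ j,
                (c i * ∏ t, x i (p t)) * (c j * ∏ t, x j (p t)) := Finset.sum_comm
            _ = _ := Finset.sum_congr rfl fun p _ => by
                rw [pow_two, Fintype.sum_mul_sum]
        have : ∑ i, ∑ j, c i * c j * ((∑ k, x i k * x j k) ^ n / n !)
            = (∑ p : Fin n → Fin M, (∑ i, c i * ∏ t, x i (p t)) ^ 2) / n ! := by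
          rw [← key]
          simp_rw [Finset.sum_div, mul_div_assoc]
        rw [this]
        positivity

lemma gammaHalf_val {cc : ℝ} (hc : 0 < cc) :
    ∫ t in Set.Ioi (0:ℝ), t ^ (-(1:ℝ)/2) * Real.exp (-(cc * t))
      = Real.Gamma (1/2) / Real.sqrt cc := by
  have h := integral_rpow_mul_exp_neg_mul_rpow (p := 1) (q := -(1:ℝ)/2)
    one_pos (by norm_num) hc
  have he : ∫ t in Set.Ioi (0:ℝ), t ^ (-(1:ℝ)/2) * Real.exp (-(cc * t))
      = ∫ x in Set.Ioi (0:ℝ), x ^ (-(1:ℝ)/2) * Real.exp (-cc * x ^ (1:ℝ)) := by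
    refine setIntegral_congr_fun measurableSet_Ioi fun x hx => ?_
    rw [Real.rpow_one]; ring_nf
  rw [he, h]
  rw [show (-(-(1:ℝ)/2 + 1) / 1) = -(1/2 : ℝ) by norm_num,
    show ((-(1:ℝ)/2 + 1) / 1) = (1/2 : ℝ) by norm_num,
    Real.rpow_neg hc.le, ← Real.sqrt_eq_rpow]
  field_simp

lemma gammaHalf_integrable {cc : ℝ} (hc : 0 < cc) :
    IntegrableOn (fun t : ℝ => t ^ (-(1:ℝ)/2) * Real.exp (-(cc * t))) (Set.Ioi 0) := by
  by_contra h
  have h0 := integral_undef (by simpa [IntegrableOn] using h)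
  rw [gammaHalf_val hc] at h0
  have : 0 < Real.Gamma (1/2) / Real.sqrt cc :=
    div_pos (Real.Gamma_pos_of_pos (by norm_num)) (Real.sqrt_pos.mpr hc)
  linarith [h0 ▸ this]

lemma pointwise_psd {N : ℕ} (a b : Fin N → ℝ) (ha : ∀ i, 0 < a i) (hb : ∀ i, 0 < b i)
    (S : Matrix (Fin N) (Fin N) ℝ) (hS : S.PosSemidef) (r : Fin N → ℝ) {w : ℝ} (hw : 0 ≤ w) :
    0 ≤ ∑ i, ∑ j, r i * r j *
      (Real.sqrt (b i * b j) /
        Real.sqrt ((a i + a j) / 2 + (S i i + S j j - 2 * S i j) * w)) := by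
  classical
  obtain ⟨_, B, hB⟩ := psdAux hS
  have hSe : ∀ i j, S i j = ∑ k, B k i * B k j := by
    intro i j
    rw [hB, Matrix.mul_apply]
    simp [Matrix.conjTranspose_apply]
  have hD : ∀ i j, S i i + S j j - 2 * S i j = ∑ k, (B k i - B k j) ^ 2 := by
    intro i j
    simp_rw [hSe, Finset.mul_sum, ← Finset.sum_add_distrib, ← Finset.sum_sub_distrib]
    exact Finset.sum_congr rfl fun k _ => by ring
  have hDnn : ∀ i j, 0 ≤ S i i + S j j - 2 * S i j := fun i j => by
    rw [hD]; positivity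
  set cmat : Fin N → Fin N → ℝ :=
    fun i j => (a i + a j) / 2 + (S i i + S j j - 2 * S i j) * w with hcm
  have hcpos : ∀ i j, 0 < cmat i j := fun i j => by
    have := (ha i).le; have := (ha j).le
    have := mul_nonneg (hDnn i j) hw
    simp only [hcm]
    nlinarith [ha i, ha j]
  -- rewrite each entry using the Gamma integral
  have hentry : ∀ i j, r i * r j * (Real.sqrt (b i * b j) / Real.sqrt (cmat i j))
      = (Real.Gamma (1/2))⁻¹ * ∫ t in Set.Ioi (0:ℝ),
          r i * r j * Real.sqrt (b i * b j) *
            (t ^ (-(1:ℝ)/2) * Real.exp (-(cmat i j * t))) := by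
    intro i j
    rw [MeasureTheory.integral_const_mul, gammaHalf_val (hcpos i j)]
    have hg : (0:ℝ) < Real.Gamma (1/2) := Real.Gamma_pos_of_pos (by norm_num)
    field_simp
  simp only [hcm] at hentry ⊢
  calc ∑ i, ∑ j, r i * r j *
        (Real.sqrt (b i * b j) /
          Real.sqrt ((a i + a j) / 2 + (S i i + S j j - 2 * S i j) * w))
      = (Real.Gamma (1/2))⁻¹ * ∑ i, ∑ j, ∫ t in Set.Ioi (0:ℝ),
          r i * r j * Real.sqrt (b i * b j) *
            (t ^ (-(1:ℝ)/2) * Real.exp (-(((a i + a j) / 2 + (S i i + S j j - 2 * S i j) * w) * t))) := by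
        rw [Finset.mul_sum]
        exact Finset.sum_congr rfl fun i _ => by
          rw [Finset.mul_sum]
          exact Finset.sum_congr rfl fun j _ => hentry i j
    _ = (Real.Gamma (1/2))⁻¹ * ∫ t in Set.Ioi (0:ℝ), ∑ i, ∑ j,
          r i * r j * Real.sqrt (b i * b j) *
            (t ^ (-(1:ℝ)/2) * Real.exp (-(((a i + a j) / 2 + (S i i + S j j - 2 * S i j) * w) * t))) := by
        congr 1
        rw [show (∑ i, ∑ j, ∫ t in Set.Ioi (0:ℝ),
          r i * r j * Real.sqrt (b i * b j) *
            (t ^ (-(1:ℝ)/2) * Real.exp (-(((a i + a j) / 2 + (S i i + S j j - 2 * S i j) * w) * t))))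
          = ∑ i, ∫ t in Set.Ioi (0:ℝ), ∑ j,
          r i * r j * Real.sqrt (b i * b j) *
            (t ^ (-(1:ℝ)/2) * Real.exp (-(((a i + a j) / 2 + (S i i + S j j - 2 * S i j) * w) * t)))
          from Finset.sum_congr rfl fun i _ =>
            (integral_finset_sum _ fun j _ => ((gammaHalf_integrable (hcpos i j)).const_mul _)).symm]
        exact (integral_finset_sum _ fun i _ => integrable_finset_sum _ fun j _ =>
            ((gammaHalf_integrable (hcpos i j)).const_mul _)).symm
    _ ≥ 0 := by
        refine mul_nonneg (inv_nonneg.mpr (Real.Gamma_pos_of_pos (by norm_num : (0:ℝ) < 1/2)).le) ?_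
        refine setIntegral_nonneg measurableSet_Ioi fun t ht => ?_
        have ht0 : 0 < t := ht
        have h2wt : 0 ≤ 2 * w * t := by positivity
        have hform : ∀ i j : Fin N,
            r i * r j * Real.sqrt (b i * b j) *
              (t ^ (-(1:ℝ)/2) * Real.exp (-(((a i + a j) / 2 + (S i i + S j j - 2 * S i j) * w) * t)))
            = t ^ (-(1:ℝ)/2) *
              ((r i * Real.sqrt (b i) * Real.exp (-(a i * t) / 2 - w * t * S i i)) *
               (r j * Real.sqrt (b j) * Real.exp (-(a j * t) / 2 - w * t * S j j)) *
               Real.exp (∑ k, (Real.sqrt (2 * w * t) * B k i) * (Real.sqrt (2 * w * t) * B k j))) := by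
          intro i j
          have hip : ∑ k, (Real.sqrt (2 * w * t) * B k i) * (Real.sqrt (2 * w * t) * B k j)
              = 2 * w * t * S i j := by
            rw [hSe, Finset.mul_sum]
            refine Finset.sum_congr rfl fun k _ => ?_
            rw [show (Real.sqrt (2 * w * t) * B k i) * (Real.sqrt (2 * w * t) * B k j)
                = (Real.sqrt (2 * w * t) * Real.sqrt (2 * w * t)) * (B k i * B k j) by ring,
              Real.mul_self_sqrt h2wt]
          rw [hip, Real.sqrt_mul (hb i).le,
            show -(((a i + a j) / 2 + (S i i + S j j - 2 * S i j) * w) * t)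
              = (-(a i * t) / 2 - w * t * S i i) + ((-(a j * t) / 2 - w * t * S j j)
                + 2 * w * t * S i j) by ring,
            Real.exp_add, Real.exp_add]
          ring
        simp_rw [hform, ← Finset.mul_sum]
        refine mul_nonneg (Real.rpow_nonneg ht0.le _) ?_
        exact expInner_psd (fun i => r i * Real.sqrt (b i) * Real.exp (-(a i * t) / 2 - w * t * S i i))
          (fun i k => Real.sqrt (2 * w * t) * B k i)

/-- Finite-dimensional form of Theorem 1: the non-stationary covariance matrix built from
positive functions `a`, `b`, a positive semidefinite matrix `S` (covariance of the auxiliary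
Gaussian field, inducing the resistance distances `D i j = S i i + S j j - 2 S i j`) and a
finite Borel measure `F` on `(0, ∞)` is positive semidefinite. -/
theorem stmt0 (N : ℕ) (hN : 1 ≤ N) (a b : Fin N → ℝ)
    (ha : ∀ i, 0 < a i) (hb : ∀ i, 0 < b i)
    (S : Matrix (Fin N) (Fin N) ℝ) (hS : S.PosSemidef)
    (F : Measure ℝ) [IsFiniteMeasure F]
    (K : Matrix (Fin N) (Fin N) ℝ)
    (hK : ∀ i j, K i j =
      ∫ w in Set.Ioi (0 : ℝ),
        Real.sqrt (b i * b j) /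
          Real.sqrt ((a i + a j) / 2 + (S i i + S j j - 2 * S i j) * w) ∂F) :
    ∀ r : Fin N → ℝ, 0 ≤ ∑ i, ∑ j, r i * r j * K i j := by
  intro r
  classical
  -- nonnegativity of the resistance distances
  obtain ⟨_, B, hB⟩ := psdAux hS
  have hSe : ∀ i j, S i j = ∑ k, B k i * B k j := by
    intro i j
    rw [hB, Matrix.mul_apply]
    simp [Matrix.conjTranspose_apply]
  have hDnn : ∀ i j, 0 ≤ S i i + S j j - 2 * S i j := by
    intro i j
    have hD : S i i + S j j - 2 * S i j = ∑ k, (B k i - B k j) ^ 2 := by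
      simp_rw [hSe, Finset.mul_sum, ← Finset.sum_add_distrib, ← Finset.sum_sub_distrib]
      exact Finset.sum_congr rfl fun k _ => by ring
    rw [hD]; positivity
  -- integrability of each entry integrand
  have hint : ∀ i j : Fin N, IntegrableOn
      (fun w : ℝ => Real.sqrt (b i * b j) /
        Real.sqrt ((a i + a j) / 2 + (S i i + S j j - 2 * S i j) * w)) (Set.Ioi 0) F := by
    intro i j
    have haij : 0 < (a i + a j) / 2 := by have := ha i; have := ha j; linarith
    have hcpos : ∀ w ∈ Set.Ioi (0:ℝ),
        0 < (a i + a j) / 2 + (S i i + S j j - 2 * S i j) * w := by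
      intro w hw
      have : 0 ≤ (S i i + S j j - 2 * S i j) * w := mul_nonneg (hDnn i j) (le_of_lt hw)
      linarith
    refine Integrable.mono' (g := fun _ : ℝ => Real.sqrt (b i * b j) / Real.sqrt ((a i + a j) / 2))
      (integrable_const _) ?_ ?_
    · refine ContinuousOn.aestronglyMeasurable ?_ measurableSet_Ioi
      refine ContinuousOn.div continuousOn_const ?_ ?_
      · exact (Real.continuous_sqrt.comp (by continuity)).continuousOn
      · intro w hw
        exact ne_of_gt (Real.sqrt_pos.mpr (hcpos w hw))
    · refine (ae_restrict_iff' measurableSet_Ioi).mpr (ae_of_all _ fun w hw => ?_)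
      have h1 := hcpos w hw
      rw [Real.norm_eq_abs, abs_of_nonneg (div_nonneg (Real.sqrt_nonneg _) (Real.sqrt_nonneg _))]
      refine div_le_div_of_nonneg_left (Real.sqrt_nonneg _) (Real.sqrt_pos.mpr haij) ?_
      refine Real.sqrt_le_sqrt ?_
      have : 0 ≤ (S i i + S j j - 2 * S i j) * w := mul_nonneg (hDnn i j) (le_of_lt hw)
      linarith
  calc ∑ i, ∑ j, r i * r j * K i j
      = ∑ i, ∑ j, ∫ w in Set.Ioi (0:ℝ), r i * r j *
          (Real.sqrt (b i * b j) /
            Real.sqrt ((a i + a j) / 2 + (S i i + S j j - 2 * S i j) * w)) ∂F := by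
        refine Finset.sum_congr rfl fun i _ => Finset.sum_congr rfl fun j _ => ?_
        rw [hK i j, MeasureTheory.integral_const_mul]
    _ = ∫ w in Set.Ioi (0:ℝ), ∑ i, ∑ j, r i * r j *
          (Real.sqrt (b i * b j) /
            Real.sqrt ((a i + a j) / 2 + (S i i + S j j - 2 * S i j) * w)) ∂F := by
        rw [show (∑ i, ∑ j, ∫ w in Set.Ioi (0:ℝ), r i * r j *
          (Real.sqrt (b i * b j) /
            Real.sqrt ((a i + a j) / 2 + (S i i + S j j - 2 * S i j) * w)) ∂F)
          = ∑ i, ∫ w in Set.Ioi (0:ℝ), ∑ j, r i * r j *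
          (Real.sqrt (b i * b j) /
            Real.sqrt ((a i + a j) / 2 + (S i i + S j j - 2 * S i j) * w)) ∂F
          from Finset.sum_congr rfl fun i _ =>
            (integral_finset_sum _ fun j _ => ((hint i j).const_mul _)).symm]
        exact (integral_finset_sum _ fun i _ => integrable_finset_sum _ fun j _ =>
          ((hint i j).const_mul _)).symm
    _ ≥ 0 := by
        refine setIntegral_nonneg measurableSet_Ioi fun w hw => ?_
        exact pointwise_psd a b ha hb S hS r (le_of_lt hw)
end

section
/- Let N, q ≥ 1. For each i ∈ Fin q let a_i, b_i : Fin N → ℝ be positive functions. Let β be a q×q real symmetric positive semidefinite matrix, let Σ be an N×N real symmetric positive semidefinite matrix, set D k l = Σ k k + Σ l l − 2·Σ k l, and let F be a finite Borel measure on (0,∞). Define the (Nq)×(Nq) real matrix K, indexed by pairs (k,i) ∈ Fin N × Fin q, with entries K (k,i) (l,j) = β i j · ∫₀^∞ √(b_i k · b_j l) / √( (a_i k + a_j l)/2 + D k l · w ) dF(w). Then K is positive semidefinite. -/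
open MeasureTheory


open MeasureTheory

namespace Stmt1Aux

variable {ι κ : Type*} [Fintype ι] [Fintype κ]

/-- nonnegativity of quadratic form -/
def qfNN {ι : Type*} [Fintype ι] (M : ι → ι → ℝ) : Prop :=
  ∀ y : ι → ℝ, 0 ≤ ∑ p, ∑ p', y p * y p' * M p p'

lemma sum_swap3 {f : ι → ι → κ → ℝ} :
    ∑ p, ∑ p', ∑ m, f p p' m = ∑ m, ∑ p, ∑ p', f p p' m := by
  calc ∑ p, ∑ p', ∑ m, f p p' m
      = ∑ p, ∑ m, ∑ p', f p p' m := Finset.sum_congr rfl fun p _ => Finset.sum_comm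
    _ = ∑ m, ∑ p, ∑ p', f p p' m := Finset.sum_comm

lemma qfNN_mul_decomp (R : ι → κ → ℝ) {W : ι → ι → ℝ} (hW : qfNN W) :
    qfNN (fun p p' => (∑ m, R p m * R p' m) * W p p') := by
  intro y
  have h1 : ∀ p p', y p * y p' * ((∑ m, R p m * R p' m) * W p p')
      = ∑ m, (y p * R p m) * (y p' * R p' m) * W p p' := by
    intro p p'
    rw [Finset.sum_mul, Finset.mul_sum]
    exact Finset.sum_congr rfl fun m _ => by ring
  simp only [h1]
  rw [sum_swap3]
  exact Finset.sum_nonneg fun m _ => hW (fun p => y p * R p m)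

lemma qfNN_pow (R : ι → κ → ℝ) (n : ℕ) :
    qfNN (fun p p' => (∑ m, R p m * R p' m) ^ n) := by
  induction n with
  | zero =>
    intro y
    simp only [pow_zero, mul_one]
    have : ∑ p, ∑ p', y p * y p' = (∑ p, y p) ^ 2 := by
      rw [sq, Finset.sum_mul_sum]
    rw [this]; positivity
  | succ n ih =>
    intro y
    have := qfNN_mul_decomp R ih y
    simpa only [pow_succ, mul_comm] using this

lemma qfNN_exp (R : ι → κ → ℝ) {t : ℝ} (ht : 0 ≤ t) :
    qfNN (fun p p' => Real.exp (t * ∑ m, R p m * R p' m)) := by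
  intro y
  set V : ι → ι → ℝ := fun p p' => ∑ m, R p m * R p' m with hV
  have hexp : ∀ x : ℝ, Real.exp x = ∑' n : ℕ, x ^ n / (n.factorial : ℝ) := by
    intro x; rw [Real.exp_eq_exp_ℝ, NormedSpace.exp_eq_tsum_div]
  have hsum : ∀ p p' : ι, Summable (fun n : ℕ => y p * y p' * ((t * V p p') ^ n / (n.factorial : ℝ))) :=
    fun p p' => (Real.summable_pow_div_factorial _).mul_left _
  have key : ∑ p, ∑ p', y p * y p' * Real.exp (t * V p p')
      = ∑' n : ℕ, ∑ p, ∑ p', y p * y p' * ((t * V p p') ^ n / (n.factorial : ℝ)) := by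
    simp_rw [hexp, ← tsum_mul_left]
    calc ∑ p, ∑ p', ∑' n : ℕ, y p * y p' * ((t * V p p') ^ n / (n.factorial : ℝ))
        = ∑ p, ∑' n : ℕ, ∑ p', y p * y p' * ((t * V p p') ^ n / (n.factorial : ℝ)) :=
          Finset.sum_congr rfl fun p _ => (Summable.tsum_finsetSum fun p' _ => hsum p p').symm
      _ = ∑' n : ℕ, ∑ p, ∑ p', y p * y p' * ((t * V p p') ^ n / (n.factorial : ℝ)) :=
          (Summable.tsum_finsetSum fun p _ => summable_sum fun p' _ => hsum p p').symm
  rw [key]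
  refine tsum_nonneg fun n => ?_
  have h2 : ∑ p, ∑ p', y p * y p' * ((t * V p p') ^ n / (n.factorial : ℝ))
      = (t ^ n / (n.factorial : ℝ)) * ∑ p, ∑ p', y p * y p' * (V p p') ^ n := by
    rw [Finset.mul_sum]
    refine Finset.sum_congr rfl fun p _ => ?_
    rw [Finset.mul_sum]
    exact Finset.sum_congr rfl fun p' _ => by rw [mul_pow]; ring
  rw [h2]
  exact mul_nonneg (by positivity) (qfNN_pow R n y)



lemma gamma_integrand_integrable {x : ℝ} (hx : 0 < x) :
    IntegrableOn (fun t : ℝ => t ^ (-(1/2) : ℝ) * Real.exp (-(x * t))) (Set.Ioi 0) := by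
  have := integrableOn_rpow_mul_exp_neg_mul_rpow (s := -(1/2)) (p := 1) (b := x)
    (by norm_num) one_pos hx
  simpa [Real.rpow_one, neg_mul] using this

lemma inv_sqrt_eq {x : ℝ} (hx : 0 < x) :
    1 / Real.sqrt x = (Real.Gamma (1/2))⁻¹ *
      ∫ t in Set.Ioi (0:ℝ), t ^ (-(1/2) : ℝ) * Real.exp (-(x * t)) := by
  have h := Real.integral_rpow_mul_exp_neg_mul_Ioi (a := 1/2) (r := x) one_half_pos hx
  rw [show ((1:ℝ)/2 - 1) = -(1/2) by norm_num] at h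
  rw [h]
  have h2 : ((1/x : ℝ)) ^ ((1:ℝ)/2) = 1 / Real.sqrt x := by
    rw [← Real.sqrt_eq_rpow, one_div, Real.sqrt_inv, one_div]
  rw [h2]
  have hΓ : Real.Gamma (1/2) ≠ 0 := (Real.Gamma_pos_of_pos one_half_pos).ne'
  field_simp



variable {ι κ : Type*} [Fintype ι] [Fintype κ]

lemma qfNN_inv_sqrt (c : ι → ℝ) (hc : ∀ p, 0 < c p) (R : ι → κ → ℝ) {w : ℝ} (hw : 0 ≤ w) :
    qfNN (fun p p' => 1 / Real.sqrt (c p + c p' +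
      ((∑ m, R p m * R p m) + (∑ m, R p' m * R p' m) - 2 * ∑ m, R p m * R p' m) * w)) := by
  intro y
  set V : ι → ι → ℝ := fun p p' => ∑ m, R p m * R p' m with hV
  have hD : ∀ p p', 0 ≤ V p p + V p' p' - 2 * V p p' := by
    intro p p'
    have h : V p p + V p' p' - 2 * V p p' = ∑ m, (R p m - R p' m) ^ 2 := by
      simp only [hV, Finset.mul_sum, ← Finset.sum_add_distrib, ← Finset.sum_sub_distrib]
      exact Finset.sum_congr rfl fun m _ => by ring
    rw [h]; positivity
  set x : ι → ι → ℝ := fun p p' => c p + c p' + (V p p + V p' p' - 2 * V p p') * w with hxdef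
  have hx : ∀ p p', 0 < x p p' := by
    intro p p'
    have h1 := mul_nonneg (hD p p') hw
    have := hc p; have := hc p'
    simp only [hxdef]; linarith
  show 0 ≤ ∑ p, ∑ p', y p * y p' * (1 / Real.sqrt (x p p'))
  have h1 : ∀ p p' : ι, y p * y p' * (1 / Real.sqrt (x p p')) =
      (Real.Gamma (1/2))⁻¹ * ∫ t in Set.Ioi (0:ℝ),
        y p * y p' * (t ^ (-(1/2) : ℝ) * Real.exp (-(x p p' * t))) := by
    intro p p'
    rw [inv_sqrt_eq (hx p p'), integral_const_mul]
    ring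
  simp only [h1]
  simp_rw [← Finset.mul_sum]
  have hint : ∀ p p' : ι, IntegrableOn
      (fun t : ℝ => y p * y p' * (t ^ (-(1/2) : ℝ) * Real.exp (-(x p p' * t)))) (Set.Ioi 0) :=
    fun p p' => (gamma_integrand_integrable (hx p p')).const_mul _
  have hswap : ∑ p, ∑ p', ∫ t in Set.Ioi (0:ℝ),
        y p * y p' * (t ^ (-(1/2) : ℝ) * Real.exp (-(x p p' * t)))
      = ∫ t in Set.Ioi (0:ℝ), ∑ p, ∑ p',
        y p * y p' * (t ^ (-(1/2) : ℝ) * Real.exp (-(x p p' * t))) := by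
    rw [integral_finset_sum _ (fun p _ => integrable_finset_sum _ (fun p' _ => hint p p'))]
    exact Finset.sum_congr rfl fun p _ => (integral_finset_sum _ (fun p' _ => hint p p')).symm
  rw [hswap]
  refine mul_nonneg (by positivity) (setIntegral_nonneg measurableSet_Ioi fun t ht => ?_)
  have ht0 : (0:ℝ) ≤ t := le_of_lt ht
  have hterm : ∀ p p' : ι, y p * y p' * (t ^ (-(1/2) : ℝ) * Real.exp (-(x p p' * t)))
      = t ^ (-(1/2) : ℝ) * ((y p * Real.exp (-((c p + V p p * w) * t))) *
        (y p' * Real.exp (-((c p' + V p' p' * w) * t))) *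
        Real.exp ((2 * t * w) * V p p')) := by
    intro p p'
    have e : Real.exp (-((c p + V p p * w) * t)) * Real.exp (-((c p' + V p' p' * w) * t)) *
        Real.exp ((2 * t * w) * V p p') = Real.exp (-(x p p' * t)) := by
      rw [← Real.exp_add, ← Real.exp_add]
      congr 1
      simp only [hxdef]; ring
    rw [← e]; ring
  simp only [hterm]
  simp_rw [← Finset.mul_sum]
  refine mul_nonneg (by positivity) ?_
  have := qfNN_exp R (t := 2 * t * w) (by positivity)
    (fun p => y p * Real.exp (-((c p + V p p * w) * t)))
  simpa using this

end Stmt1Aux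


open Stmt1Aux
open scoped MatrixOrder

/-- Finite-dimensional form of Theorem 2: the matrix-valued non-stationary covariance matrix,
indexed by pairs `(k, i) ∈ Fin N × Fin q`, built from positive functions `a i`, `b i`, a
positive semidefinite colocated-correlation matrix `β`, a positive semidefinite matrix `S`
(inducing resistance distances `D k l = S k k + S l l - 2 S k l`) and a finite Borel measure
`F` on `(0, ∞)`, is positive semidefinite (in the quadratic-form sense). -/
theorem stmt1 (N q : ℕ) (hN : 1 ≤ N) (hq : 1 ≤ q)
    (a b : Fin q → Fin N → ℝ)
    (ha : ∀ i k, 0 < a i k) (hb : ∀ i k, 0 < b i k)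
    (β : Matrix (Fin q) (Fin q) ℝ) (hβ : β.PosSemidef)
    (S : Matrix (Fin N) (Fin N) ℝ) (hS : S.PosSemidef)
    (F : Measure ℝ) [IsFiniteMeasure F]
    (K : Matrix (Fin N × Fin q) (Fin N × Fin q) ℝ)
    (hK : ∀ k i l j, K (k, i) (l, j) = β i j *
      ∫ w in Set.Ioi (0 : ℝ),
        Real.sqrt (b i k * b j l) /
          Real.sqrt ((a i k + a j l) / 2 + (S k k + S l l - 2 * S k l) * w) ∂F) :
    ∀ r : Fin N × Fin q → ℝ, 0 ≤ ∑ p, ∑ p', r p * r p' * K p p' := by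
  intro r
  -- square-root decompositions of the psd matrices
  have hβsym : ∀ i j, CFC.sqrt β i j = CFC.sqrt β j i := by
    intro i j
    have := (Matrix.nonneg_iff_posSemidef.mp (CFC.sqrt_nonneg β)).isHermitian.apply i j
    simpa using this.symm
  have hβd : ∀ i j, β i j = ∑ m, CFC.sqrt β i m * CFC.sqrt β j m := by
    intro i j
    conv_lhs => rw [← CFC.sqrt_mul_sqrt_self β hβ.nonneg]
    rw [Matrix.mul_apply]
    exact Finset.sum_congr rfl fun m _ => by rw [hβsym m j]
  have hSsym : ∀ k l, CFC.sqrt S k l = CFC.sqrt S l k := by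
    intro k l
    have := (Matrix.nonneg_iff_posSemidef.mp (CFC.sqrt_nonneg S)).isHermitian.apply k l
    simpa using this.symm
  have hSd : ∀ k l, S k l = ∑ m, CFC.sqrt S k m * CFC.sqrt S l m := by
    intro k l
    conv_lhs => rw [← CFC.sqrt_mul_sqrt_self S hS.nonneg]
    rw [Matrix.mul_apply]
    exact Finset.sum_congr rfl fun m _ => by rw [hSsym m l]
  have hDnn : ∀ k l : Fin N, 0 ≤ S k k + S l l - 2 * S k l := by
    intro k l
    have h : S k k + S l l - 2 * S k l = ∑ m, (CFC.sqrt S k m - CFC.sqrt S l m) ^ 2 := by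
      simp only [hSd, Finset.mul_sum, ← Finset.sum_add_distrib, ← Finset.sum_sub_distrib]
      exact Finset.sum_congr rfl fun m _ => by ring
    rw [h]; positivity
  set W : (Fin N × Fin q) → (Fin N × Fin q) → ℝ := fun p p' =>
    ∫ w in Set.Ioi (0 : ℝ),
      Real.sqrt (b p.2 p.1 * b p'.2 p'.1) /
        Real.sqrt ((a p.2 p.1 + a p'.2 p'.1) / 2 +
          (S p.1 p.1 + S p'.1 p'.1 - 2 * S p.1 p'.1) * w) ∂F with hWdef
  -- integrability of the entries
  have hint : ∀ p p' : Fin N × Fin q, IntegrableOn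
      (fun w : ℝ => Real.sqrt (b p.2 p.1 * b p'.2 p'.1) /
        Real.sqrt ((a p.2 p.1 + a p'.2 p'.1) / 2 +
          (S p.1 p.1 + S p'.1 p'.1 - 2 * S p.1 p'.1) * w)) (Set.Ioi 0) F := by
    intro p p'
    set C : ℝ := (a p.2 p.1 + a p'.2 p'.1) / 2 with hC
    set D : ℝ := S p.1 p.1 + S p'.1 p'.1 - 2 * S p.1 p'.1 with hDd
    have hC0 : 0 < C := by have := ha p.2 p.1; have := ha p'.2 p'.1; simp only [hC]; linarith
    have hD0 : 0 ≤ D := hDnn _ _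
    have hcont : Continuous fun w : ℝ => Real.sqrt (C + D * w) :=
      Real.continuous_sqrt.comp (continuous_const.add (continuous_const.mul continuous_id))
    have hmeas : Measurable fun w : ℝ =>
        Real.sqrt (b p.2 p.1 * b p'.2 p'.1) / Real.sqrt (C + D * w) :=
      measurable_const.div hcont.measurable
    refine Measure.integrableOn_of_bounded (measure_ne_top F _) hmeas.aestronglyMeasurable
      (M := Real.sqrt (b p.2 p.1 * b p'.2 p'.1) / Real.sqrt C) ?_
    filter_upwards [ae_restrict_mem measurableSet_Ioi] with w hw
    have hw0 : (0:ℝ) ≤ w := le_of_lt hw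
    have hCpos : 0 < Real.sqrt C := Real.sqrt_pos.mpr hC0
    have hle : Real.sqrt C ≤ Real.sqrt (C + D * w) :=
      Real.sqrt_le_sqrt (by nlinarith)
    rw [Real.norm_eq_abs, abs_of_nonneg (div_nonneg (Real.sqrt_nonneg _) (Real.sqrt_nonneg _))]
    gcongr
  -- W has a nonnegative quadratic form
  have hWq : qfNN W := by
    intro y
    have h1 : ∀ p p' : Fin N × Fin q, y p * y p' * W p p' =
        ∫ w in Set.Ioi (0 : ℝ), y p * y p' *
          (Real.sqrt (b p.2 p.1 * b p'.2 p'.1) /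
            Real.sqrt ((a p.2 p.1 + a p'.2 p'.1) / 2 +
              (S p.1 p.1 + S p'.1 p'.1 - 2 * S p.1 p'.1) * w)) ∂F := by
      intro p p'
      rw [hWdef, integral_const_mul]
    simp only [h1]
    have hint' : ∀ p p' : Fin N × Fin q, IntegrableOn
        (fun w : ℝ => y p * y p' * (Real.sqrt (b p.2 p.1 * b p'.2 p'.1) /
          Real.sqrt ((a p.2 p.1 + a p'.2 p'.1) / 2 +
            (S p.1 p.1 + S p'.1 p'.1 - 2 * S p.1 p'.1) * w))) (Set.Ioi 0) F :=
      fun p p' => (hint p p').const_mul _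
    rw [show (∑ p, ∑ p', ∫ w in Set.Ioi (0:ℝ), y p * y p' *
          (Real.sqrt (b p.2 p.1 * b p'.2 p'.1) /
            Real.sqrt ((a p.2 p.1 + a p'.2 p'.1) / 2 +
              (S p.1 p.1 + S p'.1 p'.1 - 2 * S p.1 p'.1) * w)) ∂F)
        = ∫ w in Set.Ioi (0:ℝ), ∑ p, ∑ p', y p * y p' *
          (Real.sqrt (b p.2 p.1 * b p'.2 p'.1) /
            Real.sqrt ((a p.2 p.1 + a p'.2 p'.1) / 2 +
              (S p.1 p.1 + S p'.1 p'.1 - 2 * S p.1 p'.1) * w)) ∂F from by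
      rw [integral_finset_sum _ (fun p _ => integrable_finset_sum _ (fun p' _ => hint' p p'))]
      exact Finset.sum_congr rfl fun p _ =>
        (integral_finset_sum _ (fun p' _ => hint' p p')).symm]
    refine setIntegral_nonneg measurableSet_Ioi fun w hw => ?_
    have hw0 : (0:ℝ) ≤ w := le_of_lt hw
    have happ := qfNN_inv_sqrt (c := fun p : Fin N × Fin q => a p.2 p.1 / 2)
      (fun p => by have := ha p.2 p.1; linarith)
      (R := fun (p : Fin N × Fin q) (m : Fin N) => CFC.sqrt S p.1 m) hw0
      (fun p => y p * Real.sqrt (b p.2 p.1))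
    have hentry : ∀ p p' : Fin N × Fin q,
        y p * y p' * (Real.sqrt (b p.2 p.1 * b p'.2 p'.1) /
          Real.sqrt ((a p.2 p.1 + a p'.2 p'.1) / 2 +
            (S p.1 p.1 + S p'.1 p'.1 - 2 * S p.1 p'.1) * w))
        = (y p * Real.sqrt (b p.2 p.1)) * (y p' * Real.sqrt (b p'.2 p'.1)) *
          (1 / Real.sqrt (a p.2 p.1 / 2 + a p'.2 p'.1 / 2 +
            ((∑ m, CFC.sqrt S p.1 m * CFC.sqrt S p.1 m) + (∑ m, CFC.sqrt S p'.1 m * CFC.sqrt S p'.1 m)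
              - 2 * ∑ m, CFC.sqrt S p.1 m * CFC.sqrt S p'.1 m) * w)) := by
      intro p p'
      have eArg : a p.2 p.1 / 2 + a p'.2 p'.1 / 2 +
          ((∑ m, CFC.sqrt S p.1 m * CFC.sqrt S p.1 m) + (∑ m, CFC.sqrt S p'.1 m * CFC.sqrt S p'.1 m)
            - 2 * ∑ m, CFC.sqrt S p.1 m * CFC.sqrt S p'.1 m) * w
          = (a p.2 p.1 + a p'.2 p'.1) / 2 +
            (S p.1 p.1 + S p'.1 p'.1 - 2 * S p.1 p'.1) * w := by
        simp only [← hSd]; ring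
      rw [eArg, Real.sqrt_mul (hb _ _).le]
      ring
    simp only [hentry]
    simpa using happ
  -- assemble via the Schur quadratic-form lemma applied to β
  have hKW : ∀ p p' : Fin N × Fin q,
      K p p' = (∑ m, CFC.sqrt β p.2 m * CFC.sqrt β p'.2 m) * W p p' := by
    intro p p'
    rw [← hβd]
    exact hK p.1 p.2 p'.1 p'.2
  simp only [hKW]
  exact qfNN_mul_decomp (R := fun (p : Fin N × Fin q) (m : Fin q) => CFC.sqrt β p.2 m) hWq r
end

section
/- Let a₁, a₂, b₁, b₂ > 0 be reals, α = (a₁ + a₂)/2, d ≥ 0, and let F be a finite Borel measure on (0,∞). Let A₁, A₂ be real random variables on a probability space such that A₁ − A₂ is Gaussian with mean 0 and variance d. Then ∫₀^∞ √(b₁·b₂)/√(α + d·w) dF(w) = √π · E[ ∫₀^∞ ( ∫_ℝ √(b₁·b₂) · φ(z; A₁/√2, a₁/(4w)) · φ(z; A₂/√2, a₂/(4w)) dz ) · w^{−1/2} dF(w) ]. -/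
open MeasureTheory

/-- The density of a normal distribution with mean `m` and variance `v > 0`. -/
noncomputable def gaussPdf (z m v : ℝ) : ℝ :=
  (Real.sqrt (2 * Real.pi * v))⁻¹ * Real.exp (-(z - m) ^ 2 / (2 * v))

open Real in
lemma gauss_prod_integral (m₁ m₂ v₁ v₂ : ℝ) (h₁ : 0 < v₁) (h₂ : 0 < v₂) :
    ∫ z : ℝ, gaussPdf z m₁ v₁ * gaussPdf z m₂ v₂ = gaussPdf (m₁ - m₂) 0 (v₁ + v₂) := by
  have hπ := Real.pi_pos
  set b : ℝ := (v₁ + v₂) / (2 * v₁ * v₂) with hb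
  set c : ℝ := (v₂ * m₁ + v₁ * m₂) / (v₁ + v₂) with hc
  have hbpos : 0 < b := by positivity
  have key : ∀ z : ℝ, gaussPdf z m₁ v₁ * gaussPdf z m₂ v₂ =
      ((Real.sqrt (2 * π * v₁) * Real.sqrt (2 * π * v₂))⁻¹ *
        Real.exp (-(m₁ - m₂) ^ 2 / (2 * (v₁ + v₂)))) * Real.exp (-b * (z - c) ^ 2) := by
    intro z
    unfold gaussPdf
    rw [mul_mul_mul_comm, ← Real.exp_add, ← mul_inv]
    conv_rhs => rw [mul_assoc, ← Real.exp_add]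
    congr 1
    have hv₁ : v₁ ≠ 0 := h₁.ne'
    have hv₂ : v₂ ≠ 0 := h₂.ne'
    have hs : v₁ + v₂ ≠ 0 := by positivity
    rw [hb, hc]
    congr 1
    field_simp
    ring
  simp_rw [key]
  rw [integral_const_mul, integral_sub_right_eq_self (fun z => Real.exp (-b * z ^ 2)) c,
    integral_gaussian]
  have hconst : (Real.sqrt (2 * π * v₁) * Real.sqrt (2 * π * v₂))⁻¹ * Real.sqrt (π / b)
      = (Real.sqrt (2 * π * (v₁ + v₂)))⁻¹ := by
    rw [← Real.sqrt_mul (by positivity), ← Real.sqrt_inv, ← Real.sqrt_mul (by positivity),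
      ← Real.sqrt_inv]
    congr 1
    rw [hb]
    field_simp
  unfold gaussPdf
  rw [mul_assoc, mul_comm (Real.exp _), ← mul_assoc, hconst, sub_zero]

open Real ProbabilityTheory in
open scoped ENNReal NNReal in
lemma integral_exp_neg_mul_sq_gauss (d : NNReal) {t : ℝ} (ht : 0 ≤ t) :
    ∫ x, Real.exp (-t * x ^ 2) ∂(gaussianReal 0 d) = (Real.sqrt (1 + 2 * d * t))⁻¹ := by
  have hπ := Real.pi_pos
  by_cases hd : d = 0
  · simp [hd, gaussianReal_zero_var]
  · have hd' : (0 : ℝ) < d := lt_of_le_of_ne d.coe_nonneg (by exact_mod_cast (Ne.symm hd))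
    rw [gaussianReal_of_var_ne_zero _ hd]
    have hpdf : (gaussianPDF 0 d) = fun x => ((gaussianPDFReal 0 d x).toNNReal : ℝ≥0∞) := by
      ext x; simp [gaussianPDF, ENNReal.ofReal]
    rw [hpdf, integral_withDensity_eq_integral_smul
      ((measurable_gaussianPDFReal 0 d).real_toNNReal) _]
    have : ∀ x : ℝ, (gaussianPDFReal 0 d x).toNNReal • Real.exp (-t * x ^ 2)
        = (Real.sqrt (2 * (π * (d:ℝ))))⁻¹ * Real.exp (-(t + (2 * (d:ℝ))⁻¹) * x ^ 2) := by
      intro x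
      rw [NNReal.smul_def, Real.coe_toNNReal _ (gaussianPDFReal_nonneg 0 d x), smul_eq_mul]
      unfold gaussianPDFReal
      rw [mul_assoc, ← Real.exp_add]
      congr 1
      · rw [mul_assoc]
      field_simp
      ring
    simp_rw [this]
    rw [integral_const_mul, integral_gaussian]
    rw [← Real.sqrt_inv, ← Real.sqrt_mul (by positivity), ← Real.sqrt_inv]
    congr 1
    have h1 : (t + (2 * (d : ℝ))⁻¹) ≠ 0 := by positivity
    field_simp
    ring

/-- The representation identity (eq4) at the heart of the proofs of Theorem 1 and
Proposition 1: with `A₁ - A₂ ~ N(0, d)` (where `d` is the resistance distance) and `F` a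
finite Borel measure on `(0, ∞)`,
`∫₀^∞ √(b₁ b₂)/√(α + d w) dF(w)`
`= √π · E[∫₀^∞ (∫ √(b₁ b₂) φ(z; A₁/√2, a₁/(4w)) φ(z; A₂/√2, a₂/(4w)) dz) w^{-1/2} dF(w)]`. -/
theorem stmt6 {Ω : Type*} [MeasurableSpace Ω] (μ : Measure Ω) [IsProbabilityMeasure μ]
    (a₁ a₂ b₁ b₂ : ℝ) (ha₁ : 0 < a₁) (ha₂ : 0 < a₂) (hb₁ : 0 < b₁) (hb₂ : 0 < b₂)
    (d : NNReal) (F : Measure ℝ) [IsFiniteMeasure F]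
    (A₁ A₂ : Ω → ℝ) (hA₁ : Measurable A₁) (hA₂ : Measurable A₂)
    (hA : μ.map (fun ω => A₁ ω - A₂ ω) = ProbabilityTheory.gaussianReal 0 d) :
    (∫ w in Set.Ioi (0 : ℝ),
        Real.sqrt (b₁ * b₂) / Real.sqrt ((a₁ + a₂) / 2 + (d : ℝ) * w) ∂F) =
      Real.sqrt Real.pi *
        ∫ ω, (∫ w in Set.Ioi (0 : ℝ),
          (∫ z : ℝ, Real.sqrt (b₁ * b₂) *
            gaussPdf z (A₁ ω / Real.sqrt 2) (a₁ / (4 * w)) *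
            gaussPdf z (A₂ ω / Real.sqrt 2) (a₂ / (4 * w))) * w ^ (-(1 : ℝ) / 2) ∂F) ∂μ := by
  have hπ := Real.pi_pos
  set X : Ω → ℝ := fun ω => A₁ ω - A₂ ω with hX
  have hXm : Measurable X := hA₁.sub hA₂
  set c : ℝ := a₁ + a₂ with hc
  have hc0 : 0 < c := by positivity
  set K : ℝ := Real.sqrt (b₁ * b₂) * Real.sqrt (2 / (Real.pi * c)) with hK
  -- Step 1: compute the inner z-integral and simplify the F-integrand pointwise
  have h1 : ∀ ω, (∫ w in Set.Ioi (0 : ℝ),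
          (∫ z : ℝ, Real.sqrt (b₁ * b₂) *
            gaussPdf z (A₁ ω / Real.sqrt 2) (a₁ / (4 * w)) *
            gaussPdf z (A₂ ω / Real.sqrt 2) (a₂ / (4 * w))) * w ^ (-(1 : ℝ) / 2) ∂F)
      = ∫ w in Set.Ioi (0 : ℝ), K * Real.exp (-(w / c) * X ω ^ 2) ∂F := by
    intro ω
    refine setIntegral_congr_fun measurableSet_Ioi fun w hw => ?_
    have hw0 : (0 : ℝ) < w := hw
    have e1 : (∫ z : ℝ, Real.sqrt (b₁ * b₂) *
            gaussPdf z (A₁ ω / Real.sqrt 2) (a₁ / (4 * w)) *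
            gaussPdf z (A₂ ω / Real.sqrt 2) (a₂ / (4 * w)))
        = Real.sqrt (b₁ * b₂) *
            gaussPdf (A₁ ω / Real.sqrt 2 - A₂ ω / Real.sqrt 2) 0 (a₁ / (4 * w) + a₂ / (4 * w)) := by
      simp_rw [mul_assoc]
      rw [integral_const_mul, gauss_prod_integral _ _ _ _ (by positivity) (by positivity)]
    rw [e1]
    have hsum : a₁ / (4 * w) + a₂ / (4 * w) = c / (4 * w) := by rw [hc]; ring
    have hdiff : A₁ ω / Real.sqrt 2 - A₂ ω / Real.sqrt 2 = X ω / Real.sqrt 2 := by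
      rw [hX]; ring
    rw [hsum, hdiff]
    unfold gaussPdf
    rw [sub_zero]
    have hrpow : w ^ (-(1 : ℝ) / 2) = (Real.sqrt w)⁻¹ := by
      rw [show (-(1 : ℝ) / 2) = -(1 / 2) by norm_num, Real.rpow_neg hw0.le,
        ← Real.sqrt_eq_rpow]
    have hconst : (Real.sqrt (2 * Real.pi * (c / (4 * w))))⁻¹ * (Real.sqrt w)⁻¹
        = Real.sqrt (2 / (Real.pi * c)) := by
      rw [← mul_inv, ← Real.sqrt_mul (by positivity), ← Real.sqrt_inv]
      congr 1
      field_simp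
      ring
    have hexp : -(X ω / Real.sqrt 2) ^ 2 / (2 * (c / (4 * w))) = -(w / c) * X ω ^ 2 := by
      rw [div_pow, Real.sq_sqrt (by norm_num : (0:ℝ) ≤ 2)]
      field_simp
      ring
    rw [hrpow, hK, ← hconst, hexp]
    ring
  rw [integral_congr_ae (Filter.Eventually.of_forall h1)]
  -- Step 2: Fubini
  have hmeas : Measurable (Function.uncurry fun (ω : Ω) (w : ℝ) =>
      K * Real.exp (-(w / c) * X ω ^ 2)) := by
    apply measurable_const.mul
    exact (((measurable_snd.div_const c).neg.mul
      ((hXm.comp measurable_fst).pow_const 2)).exp)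
  have hae : ∀ᵐ p ∂(μ.prod (F.restrict (Set.Ioi 0))), (0 : ℝ) < p.2 := by
    have : μ.prod (F.restrict (Set.Ioi 0))
        = (μ.prod F).restrict (Set.univ ×ˢ Set.Ioi 0) := by
      rw [← Measure.prod_restrict, Measure.restrict_univ]
    rw [this]
    filter_upwards [ae_restrict_mem (MeasurableSet.univ.prod measurableSet_Ioi)] with p hp
    exact hp.2
  have hint : Integrable (Function.uncurry fun (ω : Ω) (w : ℝ) =>
      K * Real.exp (-(w / c) * X ω ^ 2)) (μ.prod (F.restrict (Set.Ioi 0))) := by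
    refine (integrable_const |K|).mono' hmeas.aestronglyMeasurable ?_
    filter_upwards [hae] with p hp
    rw [Function.uncurry, Real.norm_eq_abs, abs_mul, Real.abs_exp]
    calc |K| * Real.exp (-(p.2 / c) * X p.1 ^ 2)
        ≤ |K| * 1 := by
          gcongr
          refine Real.exp_le_one_iff.mpr ?_
          have h0 : 0 ≤ (p.2 / c) * X p.1 ^ 2 :=
            mul_nonneg (div_nonneg hp.le hc0.le) (sq_nonneg _)
          linarith
      _ = |K| := mul_one _
  rw [integral_integral_swap hint]
  -- Step 3: compute the inner ω-integral
  have h3 : ∀ w ∈ Set.Ioi (0 : ℝ), (∫ ω, K * Real.exp (-(w / c) * X ω ^ 2) ∂μ)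
      = K * (Real.sqrt (1 + 2 * d * (w / c)))⁻¹ := by
    intro w hw
    rw [integral_const_mul]
    congr 1
    have hmap : ∫ ω, Real.exp (-(w / c) * X ω ^ 2) ∂μ
        = ∫ x, Real.exp (-(w / c) * x ^ 2) ∂(ProbabilityTheory.gaussianReal 0 d) := by
      rw [← hA, integral_map hXm.aemeasurable]
      exact (((measurable_id.pow_const 2).const_mul _).exp).aestronglyMeasurable
    rw [hmap, integral_exp_neg_mul_sq_gauss d (div_nonneg (le_of_lt hw) hc0.le)]
  rw [setIntegral_congr_fun measurableSet_Ioi h3, ← integral_const_mul]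
  refine (setIntegral_congr_fun measurableSet_Ioi fun w hw => ?_).symm
  have hw0 : (0 : ℝ) < w := hw
  have hfin : Real.sqrt Real.pi * (Real.sqrt (2 / (Real.pi * c))
        * (Real.sqrt (1 + 2 * d * (w / c)))⁻¹)
      = (Real.sqrt (c / 2 + d * w))⁻¹ := by
    rw [← Real.sqrt_inv (1 + 2 * d * (w / c)), ← Real.sqrt_mul (by positivity),
      ← Real.sqrt_mul Real.pi_pos.le, ← Real.sqrt_inv]
    congr 1
    have h1 : (1 + 2 * (d:ℝ) * (w / c)) ≠ 0 := by positivity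
    field_simp
  rw [hK, div_eq_mul_inv (Real.sqrt (b₁ * b₂)), ← hfin]
  ring
end

section
/- Let N ≥ 1, let a, b : Fin N → ℝ satisfy a i > 0 and b i > 0 for all i, let Σ be an N×N real symmetric positive semidefinite matrix, set D i j = Σ i i + Σ j j − 2·Σ i j and α i j = (a i + a j)/2, and let η > 0. Then the N×N matrix K with entries K i j = √(b i · b j / α i j) · (1 + η · D i j / α i j)^{−1/2} is positive semidefinite. -/
open MeasureTheory Real Set Nat

/-- Quadratic form of a Gram-type matrix at Hadamard powers: Schur product theorem
in quadratic-form language. -/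
private lemma gram_pow_quad_nonneg {N : ℕ} {M A : Matrix (Fin N) (Fin N) ℝ}
    (hMA : ∀ i j, M i j = ∑ k, A k i * A k j) :
    ∀ (n : ℕ) (v : Fin N → ℝ), 0 ≤ ∑ i, ∑ j, v i * v j * M i j ^ n := by
  intro n
  induction n with
  | zero =>
    intro v
    simpa [← Finset.sum_mul, ← Finset.mul_sum] using mul_self_nonneg (∑ i, v i)
  | succ n ih =>
    intro v
    have h1 : ∀ i j : Fin N, v i * v j * M i j ^ (n + 1)
        = ∑ k, (v i * A k i) * (v j * A k j) * M i j ^ n := by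
      intro i j
      have e : (∑ k, (v i * A k i) * (v j * A k j) * M i j ^ n)
          = (v i * v j * M i j ^ n) * ∑ k, A k i * A k j := by
        rw [Finset.mul_sum]
        exact Finset.sum_congr rfl fun k _ => by ring
      rw [e, ← hMA i j]
      ring
    have key : ∑ i, ∑ j, v i * v j * M i j ^ (n + 1)
        = ∑ k, ∑ i, ∑ j, (v i * A k i) * (v j * A k j) * M i j ^ n := by
      simp_rw [h1]
      calc ∑ i, ∑ j, ∑ k, (v i * A k i) * (v j * A k j) * M i j ^ n
          = ∑ i, ∑ k, ∑ j, (v i * A k i) * (v j * A k j) * M i j ^ n :=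
            Finset.sum_congr rfl fun i _ => Finset.sum_comm
        _ = ∑ k, ∑ i, ∑ j, (v i * A k i) * (v j * A k j) * M i j ^ n := Finset.sum_comm
    rw [key]
    exact Finset.sum_nonneg fun k _ => ih (fun i => v i * A k i)

/-- Entrywise exponential of a Gram-type matrix has nonnegative quadratic form. -/
private lemma gram_exp_quad_nonneg {N : ℕ} {M A : Matrix (Fin N) (Fin N) ℝ}
    (hMA : ∀ i j, M i j = ∑ k, A k i * A k j) (v : Fin N → ℝ) :
    0 ≤ ∑ i, ∑ j, v i * v j * Real.exp (M i j) := by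
  have hexp : ∀ x : ℝ, Real.exp x = ∑' n : ℕ, x ^ n / (n ! : ℝ) := by
    intro x
    rw [Real.exp_eq_exp_ℝ, NormedSpace.exp_eq_tsum_div]
  have hsum : ∀ i j : Fin N, Summable (fun n : ℕ => v i * v j * (M i j ^ n / (n ! : ℝ))) :=
    fun i j => (Real.summable_pow_div_factorial (M i j)).mul_left _
  have hswap : ∑ i, ∑ j, v i * v j * Real.exp (M i j)
      = ∑' n : ℕ, ∑ i, ∑ j, v i * v j * (M i j ^ n / (n ! : ℝ)) := by
    rw [Summable.tsum_finsetSum fun i _ => summable_sum fun j _ => hsum i j]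
    refine Finset.sum_congr rfl fun i _ => ?_
    rw [Summable.tsum_finsetSum fun j _ => hsum i j]
    refine Finset.sum_congr rfl fun j _ => ?_
    rw [tsum_mul_left, ← hexp]
  rw [hswap]
  refine tsum_nonneg fun n => ?_
  have h2 : ∑ i, ∑ j, v i * v j * (M i j ^ n / (n ! : ℝ))
      = (∑ i, ∑ j, v i * v j * M i j ^ n) / (n ! : ℝ) := by
    rw [Finset.sum_div]
    exact Finset.sum_congr rfl fun i _ => by
      rw [Finset.sum_div]
      exact Finset.sum_congr rfl fun j _ => by ring
  rw [h2]
  exact div_nonneg (gram_pow_quad_nonneg hMA n v) (Nat.cast_nonneg _)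

/-- Gaussian integral representation of `y ^ (-1/2)`. -/
private lemma rpow_neg_half_eq {y : ℝ} (hy : 0 < y) :
    y ^ (-(1 : ℝ) / 2) = (2 / Real.sqrt π) * ∫ u in Ioi (0 : ℝ), Real.exp (-y * u ^ 2) := by
  rw [integral_gaussian_Ioi, Real.sqrt_div Real.pi_pos.le]
  have h1 : y ^ (-(1 : ℝ) / 2) = (Real.sqrt y)⁻¹ := by
    rw [neg_div, Real.rpow_neg hy.le, Real.sqrt_eq_rpow]
  have hπ : Real.sqrt π ≠ 0 := by positivity
  have hsy : Real.sqrt y ≠ 0 := (Real.sqrt_pos.mpr hy).ne'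
  have h2 : (2 / Real.sqrt π) * (Real.sqrt π / Real.sqrt y / 2) = (Real.sqrt y)⁻¹ := by
    field_simp
  rw [h1, h2]

/-- Finite-dimensional form of Example 1 (Dirac measure at `η` in Theorem 1): the matrix with
entries `K i j = √(b i b j / α i j) (1 + η D i j / α i j)^{-1/2}`, where
`α i j = (a i + a j)/2` and `D i j = S i i + S j j - 2 S i j` for a positive semidefinite
matrix `S`, is positive semidefinite. -/
theorem stmt11 (N : ℕ) (hN : 1 ≤ N) (a b : Fin N → ℝ)
    (ha : ∀ i, 0 < a i) (hb : ∀ i, 0 < b i)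
    (S : Matrix (Fin N) (Fin N) ℝ) (hS : S.PosSemidef)
    (η : ℝ) (hη : 0 < η)
    (K : Matrix (Fin N) (Fin N) ℝ)
    (hK : ∀ i j, K i j =
      Real.sqrt (b i * b j / ((a i + a j) / 2)) *
        (1 + η * (S i i + S j j - 2 * S i j) / ((a i + a j) / 2)) ^ (-(1 : ℝ) / 2)) :
    ∀ r : Fin N → ℝ, 0 ≤ ∑ i, ∑ j, r i * r j * K i j := by
  classical
  -- Gram decomposition of S
  obtain ⟨A, hA⟩ : ∃ A : Matrix (Fin N) (Fin N) ℝ, S = A.conjTranspose * A := by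
    open scoped MatrixOrder in
    obtain ⟨X, hX, -, hXS⟩ := CFC.exists_sqrt_of_isSelfAdjoint_of_quasispectrumRestricts
      hS.isHermitian (QuasispectrumRestricts.nnreal_of_nonneg hS.nonneg)
    exact ⟨X, by rw [← hXS]; exact congrArg (· * X) hX.star_eq.symm⟩
  have hSA : ∀ i j, S i j = ∑ k, A k i * A k j := by
    intro i j
    rw [hA]
    simp [Matrix.mul_apply, Matrix.conjTranspose_apply]
  -- D is nonnegative
  have hD : ∀ i j, 0 ≤ S i i + S j j - 2 * S i j := by
    intro i j
    have h : ∑ k, (A k i - A k j) ^ 2 = S i i + S j j - 2 * S i j := by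
      have e : ∀ k : Fin N, (A k i - A k j) ^ 2
          = A k i * A k i + A k j * A k j - 2 * (A k i * A k j) := fun k => by ring
      simp_rw [e, Finset.sum_sub_distrib, Finset.sum_add_distrib, ← Finset.mul_sum, ← hSA]
    rw [← h]
    exact Finset.sum_nonneg fun k _ => sq_nonneg _
  set x : Fin N → Fin N → ℝ :=
    fun i j => (a i + a j) / 2 + η * (S i i + S j j - 2 * S i j) with hxdef
  have hα : ∀ i j : Fin N, 0 < (a i + a j) / 2 := fun i j => by
    have := ha i; have := ha j; linarith
  have hx : ∀ i j, 0 < x i j := fun i j =>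
    add_pos_of_pos_of_nonneg (hα i j) (mul_nonneg hη.le (hD i j))
  -- rewrite K
  have hK' : ∀ i j, K i j = Real.sqrt (b i) * Real.sqrt (b j) * x i j ^ (-(1 : ℝ) / 2) := by
    intro i j
    have hαij := hα i j
    have hs' : Real.sqrt ((a i + a j) / 2) ≠ 0 := (Real.sqrt_pos.mpr hαij).ne'
    have h1 : 1 + η * (S i i + S j j - 2 * S i j) / ((a i + a j) / 2)
        = x i j / ((a i + a j) / 2) := by
      rw [eq_div_iff hαij.ne']
      simp only [hxdef]
      rw [add_mul, one_mul, div_mul_cancel₀ _ hαij.ne']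
    have h2 : (x i j / ((a i + a j) / 2)) ^ (-(1 : ℝ) / 2)
        = x i j ^ (-(1 : ℝ) / 2) / ((a i + a j) / 2) ^ (-(1 : ℝ) / 2) :=
      Real.div_rpow (hx i j).le hαij.le _
    have h3 : ((a i + a j) / 2 : ℝ) ^ (-(1 : ℝ) / 2) = (Real.sqrt ((a i + a j) / 2))⁻¹ := by
      rw [neg_div, Real.rpow_neg hαij.le, Real.sqrt_eq_rpow]
    have h4 : Real.sqrt (b i * b j / ((a i + a j) / 2))
        = Real.sqrt (b i) * Real.sqrt (b j) / Real.sqrt ((a i + a j) / 2) := by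
      rw [Real.sqrt_div (mul_nonneg (hb i).le (hb j).le), Real.sqrt_mul (hb i).le]
    have hfin : ∀ (cc X sα : ℝ), sα ≠ 0 → cc / sα * (X * sα) = cc * X := by
      intro cc X sα h
      rw [mul_comm X sα, ← mul_assoc, div_mul_cancel₀ _ h]
    rw [hK i j, h1, h2, h3, h4, div_eq_mul_inv (x i j ^ (-(1 : ℝ) / 2)), inv_inv]
    exact hfin _ _ _ hs'
  intro r
  set s : Fin N → ℝ := fun i => r i * Real.sqrt (b i) with hs
  -- integrability
  have hint : ∀ i j : Fin N, IntegrableOn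
      (fun u : ℝ => s i * s j * Real.exp (-x i j * u ^ 2)) (Ioi 0) := by
    intro i j
    exact ((integrable_exp_neg_mul_sq (hx i j)).const_mul _).integrableOn
  have key : ∑ i, ∑ j, r i * r j * K i j
      = (2 / Real.sqrt π) *
        ∫ u in Ioi (0 : ℝ), ∑ i, ∑ j, s i * s j * Real.exp (-x i j * u ^ 2) := by
    rw [MeasureTheory.integral_finset_sum _
      (fun i _ => integrable_finset_sum _ fun j _ => hint i j)]
    simp_rw [MeasureTheory.integral_finset_sum _ (fun j (_ : j ∈ Finset.univ) => hint _ j)]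
    rw [Finset.mul_sum]
    refine Finset.sum_congr rfl fun i _ => ?_
    rw [Finset.mul_sum]
    refine Finset.sum_congr rfl fun j _ => ?_
    rw [hK' i j, rpow_neg_half_eq (hx i j), MeasureTheory.integral_const_mul]
    simp only [hs]
    ring
  rw [key]
  have hpos : (0 : ℝ) < 2 / Real.sqrt π := by positivity
  refine mul_nonneg hpos.le ?_
  refine setIntegral_nonneg measurableSet_Ioi fun u _ => ?_
  -- pointwise nonnegativity via the Schur argument
  set c : ℝ := 2 * η * u ^ 2 with hc
  have hcnn : 0 ≤ c := by positivity
  set T : Matrix (Fin N) (Fin N) ℝ := Matrix.of fun i j => c * S i j with hT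
  have hTA : ∀ i j, T i j = ∑ k, (Real.sqrt c * A k i) * (Real.sqrt c * A k j) := by
    intro i j
    show c * S i j = _
    simp_rw [hSA, Finset.mul_sum]
    refine Finset.sum_congr rfl fun k _ => ?_
    have hcc : Real.sqrt c * Real.sqrt c = c := Real.mul_self_sqrt hcnn
    calc c * (A k i * A k j) = (Real.sqrt c * Real.sqrt c) * (A k i * A k j) := by rw [hcc]
      _ = Real.sqrt c * A k i * (Real.sqrt c * A k j) := by ring
  set w : Fin N → ℝ := fun i => s i * Real.exp (-(a i / 2 + η * S i i) * u ^ 2) with hw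
  have hpt : ∀ i j : Fin N,
      w i * w j * Real.exp (T i j) = s i * s j * Real.exp (-x i j * u ^ 2) := by
    intro i j
    have hTij : T i j = c * S i j := rfl
    simp only [hw, hTij]
    rw [mul_mul_mul_comm, ← Real.exp_add, mul_assoc, ← Real.exp_add]
    congr 2
    simp only [hxdef, hc]
    ring
  simp_rw [← hpt]
  exact gram_exp_quad_nonneg
    (A := Matrix.of fun k i => Real.sqrt c * A k i) hTA w
end
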